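/- The family {F(d) : d ∈ D} is pairwise disjoint, where F(d) = cl U(d) \ ⋃_{e ∈ D_d} W(e). -/

import Mathlib

open Set Topology

/-- The Cantor space `2^ℕ`, with coordinates indexed by the positive integers. -/
abbrev Cant : Type := ℕ+ → Bool

/-- The support of a point of the Cantor space, as a set of (positive) natural numbers. -/
def ksupp (x : Cant) : Set ℕ := {i | ∃ h : 0 < i, x ⟨i, h⟩ = true}

/-- The plane. -/
abbrev Plane : Type := EuclideanSpace ℝ (Fin 2)

/-- `N_d = max supp d` (with `sSup ∅ = 0` for the zero point). -/
noncomputable def Nd (d : Cant) : ℕ := sSup (ksupp d)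

/-- The basic clopen set `V_d = {y : y(i) = d(i) for 1 ≤ i ≤ N_d}`. -/
noncomputable def Vd (d : Cant) : Set Cant :=
  {y | ∀ i : ℕ+, (i : ℕ) ≤ Nd d → y i = d i}

/-- The set `D_d` of children of `d ∈ D`: the points of `D_{k_d+1}` agreeing with `d`
on the coordinates `1, …, N_d`. -/
noncomputable def Dch (d : Cant) : Set Cant :=
  {e | (ksupp e).Finite ∧ (ksupp e).ncard = (ksupp d).ncard + 1 ∧
    ∀ i : ℕ+, (i : ℕ) ≤ Nd d → e i = d i}

/-- The ball `W(d) = B(σ(d), 2^{−ℓ(d)})`. -/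
noncomputable def Wb (σ : Cant → Plane) (ℓ : Cant → ℕ) (d : Cant) : Set Plane :=
  Metric.ball (σ d) ((2 : ℝ) ^ (-(ℓ d : ℤ)))

/-- The ball `U(d) = B(σ(d), 2^{−ℓ(d)−1})`. -/
noncomputable def Ub (σ : Cant → Plane) (ℓ : Cant → ℕ) (d : Cant) : Set Plane :=
  Metric.ball (σ d) ((2 : ℝ) ^ (-(ℓ d : ℤ) - 1))

/-- The resulting Cantor set `K = ⋂_n cl (⋃ {W(d) : d ∈ D_n})`. -/
noncomputable def Kset (σ : Cant → Plane) (ℓ : Cant → ℕ) : Set Plane :=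
  ⋂ n : ℕ, closure (⋃ d ∈ {d : Cant | (ksupp d).Finite ∧ (ksupp d).ncard = n}, Wb σ ℓ d)

/-- The closed set `F(d) = cl U(d) \ ⋃_{e ∈ D_d} W(e)`. -/
noncomputable def Fd (σ : Cant → Plane) (ℓ : Cant → ℕ) (d : Cant) : Set Plane :=
  closure (Ub σ ℓ d) \ ⋃ e ∈ Dch d, Wb σ ℓ e

/-- The three conditions imposed on the maps `σ : D → ℝ²` and `ℓ : D → ω`:
(1) `⟨σ(e) : e ∈ D_d⟩` converges to `σ(d)` (in the sense that `σ(e)` is close to `σ(d)`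
    once the added support element `N_e` of the child `e` is large);
(2) `cl W(e) ⊆ U(d) \ {σ(d)}` whenever `e ∈ D_d`;
(3) `{cl W(d) : d ∈ D_n}` is pairwise disjoint for every `n`. -/
def CantorConds (σ : Cant → Plane) (ℓ : Cant → ℕ) : Prop :=
  (∀ d : Cant, (ksupp d).Finite → ∀ ε > (0 : ℝ), ∃ M : ℕ, ∀ e ∈ Dch d,
      M ≤ Nd e → dist (σ e) (σ d) < ε) ∧
  (∀ d : Cant, (ksupp d).Finite → ∀ e ∈ Dch d,
      closure (Wb σ ℓ e) ⊆ Ub σ ℓ d \ {σ d}) ∧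
  (∀ n : ℕ, ∀ d e : Cant, (ksupp d).Finite → (ksupp d).ncard = n →
      (ksupp e).Finite → (ksupp e).ncard = n → d ≠ e →
      Disjoint (closure (Wb σ ℓ d)) (closure (Wb σ ℓ e)))

/-! ### Auxiliary lemmas -/

/-- The parent of `e`: erase the top support element. -/
noncomputable def par (e : Cant) : Cant := fun i => if (i : ℕ) = Nd e then false else e i

lemma par_apply (e : Cant) (i : ℕ+) (h : (i : ℕ) ≠ Nd e) : par e i = e i := if_neg h

lemma ksupp_par (e : Cant) : ksupp (par e) = ksupp e \ {Nd e} := by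
  ext i
  simp only [ksupp, mem_setOf_eq, mem_diff, mem_singleton_iff]
  constructor
  · rintro ⟨h, hx⟩
    by_cases hi : i = Nd e
    · rw [show par e ⟨i, h⟩ = false from if_pos hi] at hx
      exact absurd hx (by simp)
    · rw [show par e ⟨i, h⟩ = e ⟨i, h⟩ from if_neg hi] at hx
      exact ⟨⟨h, hx⟩, hi⟩
  · rintro ⟨⟨h, hx⟩, hne⟩
    exact ⟨h, by rw [show par e ⟨i, h⟩ = e ⟨i, h⟩ from if_neg hne]; exact hx⟩

lemma Nd_mem (e : Cant) (hf : (ksupp e).Finite) (hne : (ksupp e).Nonempty) :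
    Nd e ∈ ksupp e := Nat.sSup_mem hne hf.bddAbove

lemma Nd_pos (e : Cant) (hf : (ksupp e).Finite) (hne : (ksupp e).Nonempty) :
    0 < Nd e := (Nd_mem e hf hne).1

lemma ksupp_par_finite (e : Cant) (hf : (ksupp e).Finite) : (ksupp (par e)).Finite := by
  rw [ksupp_par]; exact hf.diff

lemma ncard_par (e : Cant) (hf : (ksupp e).Finite) (hne : (ksupp e).Nonempty) :
    (ksupp (par e)).ncard + 1 = (ksupp e).ncard := by
  rw [ksupp_par]
  exact Set.ncard_diff_singleton_add_one (Nd_mem e hf hne) hf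

lemma Nd_par_lt (e : Cant) (hf : (ksupp e).Finite) (hne : (ksupp e).Nonempty) :
    Nd (par e) < Nd e := by
  rcases eq_or_ne (ksupp (par e)) ∅ with h | h
  · rw [Nd, h]
    simpa using Nd_pos e hf hne
  · have hf' : (ksupp (par e)).Finite := ksupp_par_finite e hf
    have hne' : (ksupp (par e)).Nonempty := nonempty_iff_ne_empty.mpr h
    have hm := Nd_mem (par e) hf' hne'
    rw [ksupp_par] at hm
    have hle : Nd (par e) ≤ Nd e := le_csSup hf.bddAbove hm.1
    exact lt_of_le_of_ne hle hm.2

lemma mem_Dch_par (e : Cant) (hf : (ksupp e).Finite) (hne : (ksupp e).Nonempty) :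
    e ∈ Dch (par e) := by
  refine ⟨hf, (ncard_par e hf hne).symm, fun i hi => ?_⟩
  have : (i : ℕ) ≠ Nd e := by
    have := Nd_par_lt e hf hne
    omega
  exact (par_apply e i this).symm

lemma U_subset_W (σ : Cant → Plane) (ℓ : Cant → ℕ) (d : Cant) :
    Ub σ ℓ d ⊆ Wb σ ℓ d :=
  Metric.ball_subset_ball (le_of_lt (zpow_lt_zpow_right₀ one_lt_two (by linarith)))

lemma clU_subset_W (σ : Cant → Plane) (ℓ : Cant → ℕ) (d : Cant) :
    closure (Ub σ ℓ d) ⊆ Wb σ ℓ d :=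
  (Metric.closure_ball_subset_closedBall).trans
    (Metric.closedBall_subset_ball (zpow_lt_zpow_right₀ one_lt_two (by linarith)))

/-- Key lemma: any `e ∈ D` of support size `n` lies, together with `cl U(e)`, inside `W(c)`
for a child `c` of some `a ∈ D_k`, for each `k < n`. -/
lemma key_lemma (σ : Cant → Plane) (ℓ : Cant → ℕ) (hc : CantorConds σ ℓ) :
    ∀ n : ℕ, ∀ e : Cant, (ksupp e).Finite → (ksupp e).ncard = n → ∀ k, k < n →
    ∃ a c : Cant, (ksupp a).Finite ∧ (ksupp a).ncard = k ∧ c ∈ Dch a ∧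
      closure (Ub σ ℓ e) ⊆ Wb σ ℓ c := by
  intro n
  induction n with
  | zero => intro e _ _ k hk; omega
  | succ n ih =>
    intro e hf hn k hk
    have hne : (ksupp e).Nonempty := by
      rw [Set.nonempty_iff_ne_empty]
      intro h
      rw [h] at hn
      simp at hn
    have hfp : (ksupp (par e)).Finite := ksupp_par_finite e hf
    have hnp : (ksupp (par e)).ncard = n := by
      have := ncard_par e hf hne
      omega
    have hch : e ∈ Dch (par e) := mem_Dch_par e hf hne
    rcases eq_or_lt_of_le (Nat.lt_succ_iff.mp hk) with hkn | hkn
    · exact ⟨par e, e, hfp, hnp ▸ hkn ▸ rfl, hch, clU_subset_W σ ℓ e⟩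
    · obtain ⟨a, c, hfa, hka, hca, hsub⟩ := ih (par e) hfp hnp k hkn
      refine ⟨a, c, hfa, hka, hca, ?_⟩
      calc closure (Ub σ ℓ e)
          ⊆ closure (Wb σ ℓ e) := closure_mono (U_subset_W σ ℓ e)
        _ ⊆ Ub σ ℓ (par e) \ {σ (par e)} := hc.2.1 (par e) hfp e hch
        _ ⊆ Ub σ ℓ (par e) := diff_subset
        _ ⊆ closure (Ub σ ℓ (par e)) := subset_closure
        _ ⊆ Wb σ ℓ c := hsub

lemma Fd_subset_clU (σ : Cant → Plane) (ℓ : Cant → ℕ) (d : Cant) :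
    Fd σ ℓ d ⊆ closure (Ub σ ℓ d) := diff_subset

lemma Fd_subset_clW (σ : Cant → Plane) (ℓ : Cant → ℕ) (d : Cant) :
    Fd σ ℓ d ⊆ closure (Wb σ ℓ d) :=
  (Fd_subset_clU σ ℓ d).trans ((clU_subset_W σ ℓ d).trans subset_closure)

/-- The asymmetric half of the main theorem. -/
lemma Fd_disjoint_aux (σ : Cant → Plane) (ℓ : Cant → ℕ) (hc : CantorConds σ ℓ)
    (d e : Cant) (hd : (ksupp d).Finite) (he : (ksupp e).Finite) (hne : d ≠ e)
    (hle : (ksupp d).ncard ≤ (ksupp e).ncard) :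
    Disjoint (Fd σ ℓ d) (Fd σ ℓ e) := by
  rcases eq_or_lt_of_le hle with heq | hlt
  · exact Set.disjoint_of_subset (Fd_subset_clW σ ℓ d) (Fd_subset_clW σ ℓ e)
      (hc.2.2 (ksupp d).ncard d e hd rfl he heq.symm hne)
  · obtain ⟨a, c, hfa, hka, hca, hsub⟩ :=
      key_lemma σ ℓ hc (ksupp e).ncard e he rfl (ksupp d).ncard hlt
    by_cases had : a = d
    · subst had
      rw [Set.disjoint_right]
      intro x hxe hxd
      have hxc : x ∈ Wb σ ℓ c := hsub (Fd_subset_clU σ ℓ e hxe)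
      exact hxd.2 (Set.mem_biUnion hca hxc)
    · have h1 : Fd σ ℓ e ⊆ closure (Wb σ ℓ a) := by
        calc Fd σ ℓ e ⊆ closure (Ub σ ℓ e) := Fd_subset_clU σ ℓ e
          _ ⊆ Wb σ ℓ c := hsub
          _ ⊆ closure (Wb σ ℓ c) := subset_closure
          _ ⊆ Ub σ ℓ a \ {σ a} := hc.2.1 a hfa c hca
          _ ⊆ Ub σ ℓ a := diff_subset
          _ ⊆ Wb σ ℓ a := U_subset_W σ ℓ a
          _ ⊆ closure (Wb σ ℓ a) := subset_closure
      exact Set.disjoint_of_subset (Fd_subset_clW σ ℓ d) h1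
        (hc.2.2 (ksupp d).ncard d a hd rfl hfa hka (Ne.symm had))

/-- The family `{F(d) : d ∈ D}` is pairwise disjoint, where
`F(d) = cl U(d) \ ⋃_{e ∈ D_d} W(e)`. -/
theorem Fd_pairwise_disjoint (σ : Cant → Plane) (ℓ : Cant → ℕ)
    (hc : CantorConds σ ℓ) :
    ∀ d e : Cant, (ksupp d).Finite → (ksupp e).Finite → d ≠ e →
      Disjoint (Fd σ ℓ d) (Fd σ ℓ e) := by
  intro d e hd he hne
  rcases le_total (ksupp d).ncard (ksupp e).ncard with h | h
  · exact Fd_disjoint_aux σ ℓ hc d e hd he hne h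
  · exact (Fd_disjoint_aux σ ℓ hc e d he hd hne.symm h).symm
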